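/- If γ ∈ SL(2,ℤ) with γ ≠ I and γ ≠ −I fixes a point z ∈ ℍ (i.e., γ·z = z), then z is SL(2,ℤ)-equivalent to i or to ω = (−1 + i√3)/2; that is, there exists δ ∈ SL(2,ℤ) with δ·z = i or δ·z = ω. -/

import Mathlib

open UpperHalfPlane
open scoped MatrixGroups
open ModularGroup
open scoped Modular

lemma SL2_diag_cases (A : SL(2,ℤ)) (h1 : A 0 1 = 0) (h2 : A 1 0 = 0)
    (h3 : A 0 0 = A 1 1) : A = 1 ∨ A = -1 := by
  have hdet : A 0 0 * A 1 1 - A 0 1 * A 1 0 = 1 := by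
    have := A.2; rwa [Matrix.det_fin_two] at this
  rw [h1, h2, h3] at hdet
  simp only [mul_zero, sub_zero] at hdet
  rcases Int.eq_one_or_neg_one_of_mul_eq_one' hdet with ⟨h, _⟩ | ⟨h, _⟩
  · left
    apply Subtype.ext
    ext i j
    fin_cases i <;> fin_cases j <;> simp_all [Matrix.one_apply]
  · right
    apply Subtype.ext
    ext i j
    fin_cases i <;> fin_cases j <;> simp_all [Matrix.one_apply]

lemma fixed_pt_eqn (A : SL(2, ℤ)) (w : ℍ) (h : A • w = w) :
    ((A 0 0 : ℂ) * w + (A 0 1 : ℂ)) = ((A 1 0 : ℂ) * w + (A 1 1 : ℂ)) * w := by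
  have hd : ((A 1 0 : ℂ) * w + (A 1 1 : ℂ)) ≠ 0 := by
    have := UpperHalfPlane.denom_ne_zero (A : GL(2,ℝ)⁺) w
    simpa [UpperHalfPlane.denom] using this
  have key := congrArg (UpperHalfPlane.coe) h
  rw [UpperHalfPlane.specialLinearGroup_apply] at key
  simp only [UpperHalfPlane.coe_mk] at key
  simp only [algebraMap_int_eq, eq_intCast, Complex.ofReal_intCast] at key
  rw [div_eq_iff hd] at key
  linear_combination key

set_option maxHeartbeats 1000000 in
/-- Any point of the upper half-plane fixed by an element of `SL(2, ℤ)` other than `±I`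
is `SL(2, ℤ)`-equivalent to `i` or to `ω = (−1 + i√3)/2`. -/
theorem elliptic_point_equivalent_to_i_or_omega
    (γ : SL(2, ℤ)) (hγ1 : γ ≠ 1) (hγ2 : γ ≠ -1)
    (z : ℍ) (hfix : γ • z = z) :
    ∃ δ : SL(2, ℤ),
      ((δ • z : ℍ) : ℂ) = Complex.I ∨
      ((δ • z : ℍ) : ℂ) = (-1 + Real.sqrt 3 * Complex.I) / 2 := by
  obtain ⟨g, hg⟩ := ModularGroup.exists_smul_mem_fd z
  set w : ℍ := g • z with hw
  set A : SL(2, ℤ) := g * γ * g⁻¹ with hA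
  have hfixw : A • w = w := by
    rw [hA, hw, mul_smul, mul_smul, inv_smul_smul, hfix]
  have hA1 : A ≠ 1 := by
    intro h
    apply hγ1
    have h2 : γ = g⁻¹ * A * g := by rw [hA]; group
    rw [h] at h2; rw [h2]; group
  have hA2 : A ≠ -1 := by
    intro h
    apply hγ2
    have h2 : γ = g⁻¹ * A * g := by rw [hA]; group
    rw [h] at h2; rw [h2]; simp
  obtain ⟨a, ha⟩ : ∃ a : ℤ, A 0 0 = a := ⟨_, rfl⟩
  obtain ⟨b, hb⟩ : ∃ b : ℤ, A 0 1 = b := ⟨_, rfl⟩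
  obtain ⟨c, hc⟩ : ∃ c : ℤ, A 1 0 = c := ⟨_, rfl⟩
  obtain ⟨d, hd⟩ : ∃ d : ℤ, A 1 1 = d := ⟨_, rfl⟩
  have hdet : a * d - b * c = 1 := by
    have h2 := A.2
    rw [Matrix.det_fin_two] at h2
    rw [← ha, ← hb, ← hc, ← hd]
    exact h2
  obtain ⟨x, hx⟩ : ∃ x : ℝ, w.re = x := ⟨_, rfl⟩
  obtain ⟨y, hy⟩ : ∃ y : ℝ, w.im = y := ⟨_, rfl⟩
  have hy0 : 0 < y := hy ▸ w.im_pos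
  have hwc : (w : ℂ) = (x : ℂ) + (y : ℂ) * Complex.I := by
    rw [← hx, ← hy, ← UpperHalfPlane.coe_re, ← UpperHalfPlane.coe_im]
    exact (Complex.re_add_im _).symm
  have key := fixed_pt_eqn A w hfixw
  rw [ha, hb, hc, hd, hwc, Complex.ext_iff] at key
  obtain ⟨kre, kim⟩ := key
  simp only [Complex.add_re, Complex.add_im, Complex.mul_re, Complex.mul_im,
    Complex.intCast_re, Complex.intCast_im, Complex.ofReal_re, Complex.ofReal_im,
    Complex.I_re, Complex.I_im] at kre kim
  have KRE : (a : ℝ) * x + b = ((c : ℝ) * x + d) * x - c * y * y := by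
    linear_combination kre
  have KIM : (a : ℝ) * y = ((c : ℝ) * x + d) * y + c * y * x := by
    linear_combination kim
  -- imaginary part gives: a = 2cx + d
  have him : (a : ℝ) = 2 * c * x + d := by
    have h1 : (a : ℝ) * y = (2 * (c : ℝ) * x + d) * y := by linear_combination KIM
    exact mul_right_cancel₀ (ne_of_gt hy0) h1
  have hc0 : c ≠ 0 := by
    intro h0
    have hc0r : (c : ℝ) = 0 := by exact_mod_cast h0
    have hxr : (a : ℝ) = d := by rw [him, hc0r]; ring
    have had : a = d := by exact_mod_cast hxr
    have hb0 : b = 0 := by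
      have hbr : (b : ℝ) = 0 := by
        linear_combination KRE - x * hxr + (x^2 - y^2) * hc0r
      exact_mod_cast hbr
    rcases SL2_diag_cases A (hb ▸ hb0) (hc ▸ h0) (by rw [ha, hd]; exact had) with h | h
    · exact hA1 h
    · exact hA2 h
  -- real part gives c(x²+y²) = -b
  have hqc : (c : ℝ) * (x^2 + y^2) = -b := by linear_combination KRE - x * him
  -- fundamental domain facts
  have hn : 1 ≤ x * x + y * y := by
    have h1 := hg.1
    rwa [Complex.normSq_apply, UpperHalfPlane.coe_re, UpperHalfPlane.coe_im, hx, hy] at h1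
  have hxb : |x| ≤ 1 / 2 := by rw [← hx]; exact hg.2
  have hysq : 3 / 4 ≤ y ^ 2 := by cases abs_cases x <;> nlinarith
  have hx2 : x ^ 2 ≤ 1 / 4 := by cases abs_cases x <;> nlinarith
  have hdetR : (a : ℝ) * d - b * c = 1 := by exact_mod_cast hdet
  have hkey : 4 * (c : ℝ)^2 * y^2 = 4 - ((a : ℝ) + d)^2 := by
    linear_combination (4 * (c : ℝ)) * hqc + ((a : ℝ) - d + 2 * c * x) * him + 4 * hdetR
  have hc2ge : 1 ≤ c ^ 2 := by
    have h1 : 1 ≤ |c| := Int.one_le_abs hc0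
    nlinarith [sq_abs c]
  have hc2geR : (1 : ℝ) ≤ (c : ℝ) ^ 2 := by exact_mod_cast hc2ge
  have h3c : (3 : ℝ) * (c : ℝ)^2 ≤ 4 - ((a : ℝ) + d)^2 := by nlinarith
  have h3cZ : 3 * c^2 + (a + d)^2 ≤ 4 := by
    exact_mod_cast (show (3 : ℝ) * (c : ℝ)^2 + ((a : ℝ) + d)^2 ≤ 4 by nlinarith [h3c] : _)
  have habs : |c| ≤ 1 := by nlinarith [sq_abs c, abs_nonneg c, sq_nonneg (a + d)]
  have hcpm : c = 1 ∨ c = -1 := by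
    rcases abs_le.mp habs with ⟨hl, hr⟩; omega
  have hc2Z : c ^ 2 = 1 := by rcases hcpm with h | h <;> rw [h] <;> ring
  have hc2R : ((c : ℝ)) ^ 2 = 1 := by exact_mod_cast hc2Z
  have hy4 : 4 * y^2 = 4 - ((a : ℝ) + d)^2 := by rw [← hkey, hc2R]; ring
  have h1t : -(1 : ℝ) ≤ (a : ℝ) + d := by nlinarith
  have h2t : ((a : ℝ) + d) ≤ 1 := by nlinarith
  have h1tZ : -1 ≤ a + d := by exact_mod_cast h1t
  have h2tZ : a + d ≤ 1 := by exact_mod_cast h2t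
  by_cases ht0 : a + d = 0
  · -- order 4 case : w = i
    have htR : (a : ℝ) + d = 0 := by exact_mod_cast ht0
    have hy1 : y = 1 := by nlinarith [hy4, htR, sq_nonneg (y - 1), sq_nonneg (y + 1)]
    have hxeq : ((c * a : ℤ) : ℝ) = x := by
      push_cast
      linear_combination ((c : ℝ) / 2) * him + ((c : ℝ) / 2) * htR + x * hc2R
    have hca0 : c * a = 0 := by
      by_contra hne
      have h1 : 1 ≤ |c * a| := Int.one_le_abs hne
      have h2 : (1 : ℝ) ≤ |((c * a : ℤ) : ℝ)| := by
        rw [← Int.cast_abs]; exact_mod_cast h1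
      rw [hxeq] at h2
      linarith
    have hx0 : x = 0 := by
      rw [← hxeq, hca0]; norm_num
    refine ⟨g, Or.inl ?_⟩
    show (w : ℂ) = Complex.I
    rw [hwc, hx0, hy1]
    simp
  · -- order 3/6 case
    have htZ : a + d = 1 ∨ a + d = -1 := by omega
    have ht2R : ((a : ℝ) + d)^2 = 1 := by
      have : (a + d)^2 = 1 := by rcases htZ with h | h <;> rw [h] <;> ring
      exact_mod_cast this
    have hy3 : 4 * y^2 = 3 := by rw [hy4, ht2R]; norm_num
    have hsq3 : Real.sqrt 3 = 2 * y := by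
      rw [show (3 : ℝ) = (2*y)^2 by nlinarith]
      exact Real.sqrt_sq (by positivity)
    have had2 : ((a : ℝ) - d)^2 = 4 * (c : ℝ)^2 * x^2 := by
      linear_combination ((a : ℝ) - d + 2 * c * x) * him
    have hadne : a - d ≠ 0 := by omega
    have hadR : ((a : ℝ) - d)^2 ≤ 1 := by
      have h4 : 4 * (c : ℝ)^2 * x^2 = 4 * x^2 := by rw [hc2R]; ring
      rw [had2, h4]; linarith
    have hadZ : (a - d)^2 ≤ 1 := by
      exact_mod_cast (by push_cast; linarith : ((a - d : ℤ) : ℝ)^2 ≤ 1)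
    have hadEqZ : (a - d)^2 = 1 := by
      have h1 : 1 ≤ |a - d| := Int.one_le_abs hadne
      nlinarith [sq_abs (a - d)]
    have hadEq : ((a : ℝ) - d)^2 = 1 := by
      exact_mod_cast (by push_cast; exact_mod_cast hadEqZ : ((a - d : ℤ) : ℝ)^2 = 1)
    have hx4 : 4 * x^2 = 1 := by
      linear_combination (-1) * had2 + hadEq + (-(4 * x^2)) * hc2R
    have hxx : (2*x - 1) * (2*x + 1) = 0 := by linear_combination hx4
    rcases mul_eq_zero.mp hxx with h | h
    · -- x = 1/2 : use T⁻¹ * g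
      have hxv : x = 1/2 := by linarith
      refine ⟨T⁻¹ * g, Or.inr ?_⟩
      rw [mul_smul]
      have hT : ((T⁻¹ • w : ℍ) : ℂ) = (w : ℂ) + (-1 : ℤ) := by
        simpa [zpow_neg_one] using ModularGroup.coe_T_zpow_smul_eq (z := w) (n := -1)
      show ((T⁻¹ • w : ℍ) : ℂ) = _
      rw [hT, hwc, hsq3, hxv]
      push_cast
      ring
    · -- x = -1/2 : use g
      have hxv : x = -(1/2) := by linarith
      refine ⟨g, Or.inr ?_⟩
      show (w : ℂ) = _
      rw [hwc, hsq3, hxv]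
      push_cast
      ring
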